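/- Let \(E = \mathbb{R}^2\) with the lexicographic order and define \(\overline{(x,y)} = (x,y) \wedge (0,1)\) for \((x,y) \in E^+\). Then this map is a truncation on E satisfying the Archimedean truncation axiom (\(\tau_3\)): if \(\overline{na} = na\) for all \(n \in \mathbb{N}\), then \(a = 0\); yet E itself is not an Archimedean Riesz space. -/

import Mathlib

lemma lex_zero_le_iff (p : ℝ × ℝ) : (0 : ℝ ×ₗ ℝ) ≤ toLex p ↔ 0 < p.1 ∨ (0 = p.1 ∧ 0 ≤ p.2) := by
  exact Prod.Lex.le_iff

lemma lex_le_iff (p q : ℝ × ℝ) : toLex p ≤ toLex q ↔ p.1 < q.1 ∨ (p.1 = q.1 ∧ p.2 ≤ q.2) :=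
  Prod.Lex.le_iff

/-- On `ℝ² ` with the lexicographic order, `a ↦ a ⊓ (0,1)` is a truncation
satisfying the Archimedean truncation axiom `(τ₃)`, although the lexicographic plane is
not an Archimedean Riesz space. -/
theorem lex_plane_archimedean_truncation :
    (∀ a : ℝ ×ₗ ℝ, 0 ≤ a → 0 ≤ a ⊓ toLex (0, 1)) ∧
    (∀ a b : ℝ ×ₗ ℝ, 0 ≤ a → 0 ≤ b →
      a ⊓ (b ⊓ toLex (0, 1)) ≤ a ⊓ toLex (0, 1) ∧ a ⊓ toLex (0, 1) ≤ a) ∧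
    (∀ a : ℝ ×ₗ ℝ, 0 ≤ a → a ⊓ toLex (0, 1) = 0 → a = 0) ∧
    (∀ a : ℝ ×ₗ ℝ, 0 ≤ a → (∀ n : ℕ, (n • a) ⊓ toLex (0, 1) = n • a) → a = 0) ∧
    ¬ (∀ x y : ℝ ×ₗ ℝ, 0 ≤ x → (∀ n : ℕ, n • x ≤ y) → x = 0) := by
  have h01 : (0 : ℝ ×ₗ ℝ) ≤ toLex (0, 1) := by
    rw [show (0 : ℝ ×ₗ ℝ) = toLex (0, 0) from rfl, lex_le_iff]
    exact Or.inr ⟨rfl, zero_le_one⟩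
  have h01ne : (toLex ((0 : ℝ), (1 : ℝ)) : ℝ ×ₗ ℝ) ≠ 0 := by
    intro h
    have := congrArg (fun z : ℝ ×ₗ ℝ => (ofLex z).2) h
    simp at this
  refine ⟨fun a ha => le_inf ha h01,
    fun a b _ _ => ⟨inf_le_inf_left a inf_le_right, inf_le_left⟩, ?_, ?_, ?_⟩
  · intro a ha h
    rcases le_total a (toLex (0, 1)) with hle | hle
    · rwa [inf_eq_left.mpr hle] at h
    · rw [inf_eq_right.mpr hle] at h
      exact absurd h h01ne
  · intro a ha h
    have hle : ∀ n : ℕ, n • a ≤ toLex (0, 1) := fun n => (h n) ▸ inf_le_right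
    obtain ⟨x, rfl⟩ := toLex.surjective a
    rw [lex_zero_le_iff] at ha
    have h1 : toLex x ≤ toLex ((0 : ℝ), 1) := by simpa using hle 1
    rw [lex_le_iff] at h1
    norm_num at h1 ha
    have hx1 : x.1 = 0 := by
      rcases ha with h | ⟨h, -⟩
      · rcases h1 with h' | ⟨h', -⟩ <;> linarith
      · linarith
    have hx2 : x.2 = 0 := by
      have hy0 : 0 ≤ x.2 := by
        rcases ha with h | h
        · linarith
        · exact h.2
      by_contra hne
      have hy : 0 < x.2 := lt_of_le_of_ne hy0 (Ne.symm hne)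
      obtain ⟨n, hn⟩ := exists_nat_gt (1 / x.2)
      have h'' := hle n
      have hsm : (n • toLex x : ℝ ×ₗ ℝ) = toLex (n • x) := rfl
      rw [hsm, lex_le_iff] at h''
      norm_num at h''
      rcases h'' with h' | h'
      · simp [hx1] at h'
      · have h2 := h'.2
        have hlt : 1 / x.2 * x.2 < n * x.2 := mul_lt_mul_of_pos_right hn hy
        rw [one_div_mul_cancel (ne_of_gt hy)] at hlt
        linarith
    have : x = (0, 0) := Prod.ext hx1 hx2
    rw [this]; rfl
  · intro hArch
    have := hArch (toLex (0, 1)) (toLex (1, 0)) h01 ?_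
    · exact h01ne this
    · intro n
      have hsm : (n • toLex ((0:ℝ), (1:ℝ)) : ℝ ×ₗ ℝ) = toLex (n • ((0:ℝ), (1:ℝ))) := rfl
      rw [hsm, lex_le_iff]
      left
      simp
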